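/- For the star with ℓ leaves and diameter 2, there exists a good system of categories with membership dimension at most 1 + 2⌈log₂ ℓ⌉. -/

import Mathlib

open Finset SimpleGraph

variable {V : Type*}

def catDist [DecidableEq V] (S : Finset (Finset V)) (s t : V) : ℕ :=
  (S.filter fun C => t ∈ C ∧ s ∉ C).card

def IsGoodSystem [DecidableEq V] (G : SimpleGraph V) (S : Finset (Finset V)) : Prop :=
  (∀ C ∈ S, (G.induce (C : Set V)).Connected) ∧
    ∀ s t : V, s ≠ t → ∃ u, G.Adj s u ∧ catDist S u t < catDist S s t

def memdim [DecidableEq V] [Fintype V] (S : Finset (Finset V)) : ℕ :=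
  univ.sup fun v : V => (S.filter fun C => v ∈ C).card

noncomputable def graphDiam [Fintype V] (G : SimpleGraph V) : ℕ :=
  univ.sup fun p : V × V => G.dist p.1 p.2

noncomputable def minMemdim (V : Type*) [DecidableEq V] [Fintype V] (G : SimpleGraph V) : ℕ :=
  sInf {m | ∃ S : Finset (Finset V), IsGoodSystem G S ∧ memdim S = m}

def starGraph (ℓ : ℕ) : SimpleGraph (Option (Fin ℓ)) where
  Adj a b := (a = none) ≠ (b = none)
  symm := ⟨fun _ _ h => h.symm⟩
  loopless := ⟨fun _ h => h rfl⟩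

/-! Auxiliary construction -/

def bitCat (ℓ : ℕ) (i : ℕ) (b : Bool) : Finset (Option (Fin ℓ)) :=
  insert none ((Finset.univ.filter fun j : Fin ℓ => j.val.testBit i = b).image some)

def starSys (ℓ : ℕ) : Finset (Finset (Option (Fin ℓ))) :=
  (Finset.univ.image fun v : Option (Fin ℓ) => ({v} : Finset (Option (Fin ℓ)))) ∪
  (Finset.univ.image fun p : Fin (Nat.clog 2 ℓ) × Bool => bitCat ℓ p.1.val p.2)

lemma starAdj {ℓ : ℕ} (j : Fin ℓ) : (_root_.starGraph ℓ).Adj (some j) none :=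
  fun h => Option.some_ne_none j (cast h.symm rfl)

lemma connected_of_none_mem {ℓ : ℕ} (s : Set (Option (Fin ℓ))) (h : none ∈ s) :
    ((_root_.starGraph ℓ).induce s).Connected := by
  rw [SimpleGraph.connected_iff]
  have key : ∀ z : s, ((_root_.starGraph ℓ).induce s).Reachable z ⟨none, h⟩ := by
    rintro ⟨z, hz⟩
    match z with
    | none => exact SimpleGraph.Reachable.refl _
    | some j => exact SimpleGraph.Adj.reachable (starAdj j)
  exact ⟨fun x y => (key x).trans (key y).symm, ⟨⟨none, h⟩⟩⟩

lemma singleton_connected {ℓ : ℕ} (v : Option (Fin ℓ)) :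
    ((_root_.starGraph ℓ).induce (({v} : Finset (Option (Fin ℓ))) : Set (Option (Fin ℓ)))).Connected := by
  rw [SimpleGraph.connected_iff]
  constructor
  · rintro ⟨x, hx⟩ ⟨y, hy⟩
    simp only [Finset.coe_singleton, Set.mem_singleton_iff] at hx hy
    subst hx; subst hy
    exact SimpleGraph.Reachable.refl _
  · exact ⟨⟨v, by simp⟩⟩

lemma singleton_mem_starSys {ℓ : ℕ} (v : Option (Fin ℓ)) : ({v} : Finset (Option (Fin ℓ))) ∈ starSys ℓ :=
  Finset.mem_union_left _ (Finset.mem_image_of_mem _ (Finset.mem_univ v))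

lemma bitCat_mem_starSys {ℓ : ℕ} (i : Fin (Nat.clog 2 ℓ)) (b : Bool) :
    bitCat ℓ i.val b ∈ starSys ℓ := by
  apply Finset.mem_union_right
  exact Finset.mem_image.mpr ⟨(i, b), Finset.mem_univ _, rfl⟩

theorem stmt9 (ℓ : ℕ) (hℓ : 1 ≤ ℓ) :
    ∃ S : Finset (Finset (Option (Fin ℓ))),
      IsGoodSystem (_root_.starGraph ℓ) S ∧ memdim S ≤ 1 + 2 * Nat.clog 2 ℓ := by
  refine ⟨starSys ℓ, ⟨?_, ?_⟩, ?_⟩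
  · -- connectivity
    intro C hC
    rcases Finset.mem_union.mp hC with h | h
    · obtain ⟨v, -, rfl⟩ := Finset.mem_image.mp h
      exact singleton_connected v
    · obtain ⟨p, -, rfl⟩ := Finset.mem_image.mp h
      exact connected_of_none_mem _ (by simp [bitCat])
  · -- goodness
    intro s t hst
    match s, t with
    | none, none => exact absurd rfl hst
    | none, some k =>
        refine ⟨some k, (starAdj k).symm, ?_⟩
        have h0 : catDist (starSys ℓ) (some k) (some k) = 0 := by
          simp [catDist, Finset.filter_false_of_mem, fun C (_ : C ∈ starSys ℓ) => fun h : some k ∈ C ∧ some k ∉ C => h.2 h.1]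
        rw [h0]
        refine Finset.card_pos.mpr ⟨{some k}, Finset.mem_filter.mpr ⟨singleton_mem_starSys _, by simp, by simp⟩⟩
    | some j, none =>
        refine ⟨none, starAdj j, ?_⟩
        have h0 : catDist (starSys ℓ) none none = 0 := by
          simp [catDist, Finset.filter_false_of_mem, fun C (_ : C ∈ starSys ℓ) => fun h : (none : Option (Fin ℓ)) ∈ C ∧ (none : Option (Fin ℓ)) ∉ C => h.2 h.1]
        rw [h0]
        refine Finset.card_pos.mpr ⟨{none}, Finset.mem_filter.mpr ⟨singleton_mem_starSys _, by simp, by simp⟩⟩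
    | some j, some k =>
        have hjk : j ≠ k := fun h => hst (by rw [h])
        refine ⟨none, starAdj j, ?_⟩
        have hle : catDist (starSys ℓ) none (some k) ≤ 1 := by
          apply le_trans (Finset.card_le_card (s := _) (t := {({some k} : Finset (Option (Fin ℓ)))}) ?_) (by simp)
          intro C hC
          obtain ⟨hCS, hkC, hnC⟩ := Finset.mem_filter.mp hC
          rcases Finset.mem_union.mp hCS with h | h
          · obtain ⟨v, -, rfl⟩ := Finset.mem_image.mp h
            simp only [Finset.mem_singleton] at hkC
            simp [hkC]
          · obtain ⟨p, -, rfl⟩ := Finset.mem_image.mp h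
            exact absurd (by simp [bitCat]) hnC
        have hge : 2 ≤ catDist (starSys ℓ) (some j) (some k) := by
          have hvne : j.val ≠ k.val := fun h => hjk (Fin.ext h)
          have hbit : ∃ i, j.val.testBit i ≠ k.val.testBit i := by
            by_contra hcon
            push_neg at hcon
            exact hvne (Nat.eq_of_testBit_eq hcon)
          obtain ⟨i, hi⟩ := hbit
          have hilt : i < Nat.clog 2 ℓ := by
            by_contra hge'
            push_neg at hge'
            have h2 : ℓ ≤ 2 ^ i := le_trans (Nat.le_pow_clog one_lt_two ℓ) (Nat.pow_le_pow_right (by norm_num) hge')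
            have hj : j.val.testBit i = false := Nat.testBit_eq_false_of_lt (lt_of_lt_of_le j.isLt h2)
            have hk : k.val.testBit i = false := Nat.testBit_eq_false_of_lt (lt_of_lt_of_le k.isLt h2)
            exact hi (hj.trans hk.symm)
          set B := bitCat ℓ i (k.val.testBit i) with hB
          have hBS : B ∈ starSys ℓ := bitCat_mem_starSys ⟨i, hilt⟩ _
          have hpair : ({({some k} : Finset (Option (Fin ℓ))), B} : Finset (Finset (Option (Fin ℓ)))) ⊆
              (starSys ℓ).filter fun C => some k ∈ C ∧ some j ∉ C := by
            intro C hC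
            rcases Finset.mem_insert.mp hC with rfl | hC
            · exact Finset.mem_filter.mpr ⟨singleton_mem_starSys _, by simp, by simp [hjk]⟩
            · rw [Finset.mem_singleton] at hC
              subst hC
              refine Finset.mem_filter.mpr ⟨hBS, ?_, ?_⟩
              · simp [hB, bitCat]
              · simp only [hB, bitCat, Finset.mem_insert, Finset.mem_image, Finset.mem_filter]
                push_neg
                refine ⟨by simp, ?_⟩
                rintro x ⟨-, hx⟩ hxj
                rw [Option.some_inj] at hxj
                subst hxj
                exact hi hx
          calc 2 = ({({some k} : Finset (Option (Fin ℓ))), B} : Finset (Finset (Option (Fin ℓ)))).card := by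
                    rw [Finset.card_insert_of_notMem, Finset.card_singleton]
                    simp only [Finset.mem_singleton]
                    intro h
                    have : none ∈ ({some k} : Finset (Option (Fin ℓ))) := by rw [h]; simp [hB, bitCat]
                    simp at this
            _ ≤ _ := Finset.card_le_card hpair
        calc catDist (starSys ℓ) none (some k) ≤ 1 := hle
          _ < 2 := one_lt_two
          _ ≤ catDist (starSys ℓ) (some j) (some k) := hge
  · -- memdim
    apply Finset.sup_le
    intro v _
    have hsub : (starSys ℓ).filter (fun C => v ∈ C) ⊆
        insert ({v} : Finset (Option (Fin ℓ)))
          (Finset.univ.image fun p : Fin (Nat.clog 2 ℓ) × Bool => bitCat ℓ p.1.val p.2) := by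
      intro C hC
      obtain ⟨hCS, hvC⟩ := Finset.mem_filter.mp hC
      rcases Finset.mem_union.mp hCS with h | h
      · obtain ⟨w, -, rfl⟩ := Finset.mem_image.mp h
        simp only [Finset.mem_singleton] at hvC
        subst hvC
        exact Finset.mem_insert_self _ _
      · exact Finset.mem_insert_of_mem h
    calc ((starSys ℓ).filter (fun C => v ∈ C)).card
        ≤ _ := Finset.card_le_card hsub
      _ ≤ 1 + (Finset.univ.image fun p : Fin (Nat.clog 2 ℓ) × Bool => bitCat ℓ p.1.val p.2).card :=
          by rw [Nat.add_comm]; exact Finset.card_insert_le _ _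
      _ ≤ 1 + (Finset.univ : Finset (Fin (Nat.clog 2 ℓ) × Bool)).card :=
          Nat.add_le_add_left (Finset.card_image_le) _
      _ ≤ 1 + 2 * Nat.clog 2 ℓ := by
          simp [Finset.card_univ, Fintype.card_prod]
          ring_nf
          omega
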